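/- Let k ∈ ℝ with e^{2ik} ≠ 1, let f : [0,1] → ℂ be continuous, and let σ ∈ ℂ. Then there exists exactly one pair (ζ, E) with ζ : [0,1] → ℂ twice continuously differentiable and E ∈ ℂ such that ζ(0) = ζ(1), ζ'(0) = ζ'(1), −ζ''(x) − 2ik ζ'(x) − E = f(x) for all x ∈ [0,1], and 2 ∫_0^1 ζ(y) dy = σ. Moreover, necessarily E = −∫_0^1 f(x) dx. -/

import Mathlib

open MeasureTheory Set


lemma ftc_within (g : ℝ → ℂ) (hg : DifferentiableOn ℝ g (Icc 0 1))
    (hc : ContinuousOn (derivWithin g (Icc 0 1)) (Icc 0 1)) :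
    ∫ x in (0:ℝ)..1, derivWithin g (Icc (0:ℝ) 1) x = g 1 - g 0 := by
  apply intervalIntegral.integral_eq_sub_of_hasDeriv_right_of_le (by norm_num)
    (hg.continuousOn)
  · intro x hx
    have hmem : Icc (0:ℝ) 1 ∈ nhds x := Icc_mem_nhds hx.1 hx.2
    have hd : DifferentiableAt ℝ g x := (hg x (Ioo_subset_Icc_self hx)).differentiableAt hmem
    rw [derivWithin_of_mem_nhds hmem]
    exact hd.hasDerivAt.hasDerivWithinAt
  · exact (hc.mono (by rw [uIcc_of_le (by norm_num : (0:ℝ) ≤ 1)])).intervalIntegrable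

lemma keyE (k : ℝ) (f : ℝ → ℂ) (ζ : ℝ → ℂ) (E : ℂ)
    (hζ : ContDiffOn ℝ 2 ζ (Icc (0:ℝ) 1)) (hper : ζ 0 = ζ 1)
    (hper' : derivWithin ζ (Icc (0:ℝ) 1) 0 = derivWithin ζ (Icc (0:ℝ) 1) 1)
    (hode : ∀ x ∈ Icc (0:ℝ) 1,
      -(derivWithin (derivWithin ζ (Icc (0:ℝ) 1)) (Icc (0:ℝ) 1) x)
        - 2 * Complex.I * k * derivWithin ζ (Icc (0:ℝ) 1) x - E = f x) :
    E = -∫ x in (0:ℝ)..1, f x := by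
  set d := derivWithin ζ (Icc (0:ℝ) 1) with hd
  set dd := derivWithin d (Icc (0:ℝ) 1) with hdd
  have hU : UniqueDiffOn ℝ (Icc (0:ℝ) 1) := uniqueDiffOn_Icc (by norm_num)
  have hd1 : ContDiffOn ℝ 1 d (Icc (0:ℝ) 1) := hζ.derivWithin hU (by norm_num)
  have hdD : DifferentiableOn ℝ d (Icc (0:ℝ) 1) := hd1.differentiableOn (by norm_num)
  have hddC : ContinuousOn dd (Icc (0:ℝ) 1) :=
    (hd1.derivWithin hU (by norm_num : (0:WithTop ℕ∞) + 1 ≤ 1)).continuousOn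
  have hdC : ContinuousOn d (Icc (0:ℝ) 1) := hd1.continuousOn
  have hζD : DifferentiableOn ℝ ζ (Icc (0:ℝ) 1) := hζ.differentiableOn (by norm_num)
  have hIdd : IntervalIntegrable dd volume 0 1 :=
    (hddC.mono (by rw [uIcc_of_le (by norm_num : (0:ℝ) ≤ 1)])).intervalIntegrable
  have hId : IntervalIntegrable d volume 0 1 :=
    (hdC.mono (by rw [uIcc_of_le (by norm_num : (0:ℝ) ≤ 1)])).intervalIntegrable
  have hid : ∫ x in (0:ℝ)..1, d x = 0 := by
    rw [ftc_within ζ hζD hdC, ← hper]; ring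
  have hidd : ∫ x in (0:ℝ)..1, dd x = 0 := by
    rw [ftc_within d hdD hddC, ← hper']; ring
  have h1 : ∫ x in (0:ℝ)..1, f x
      = ∫ x in (0:ℝ)..1, (-(dd x) - 2 * Complex.I * k * d x - E) := by
    apply intervalIntegral.integral_congr
    intro x hx
    rw [uIcc_of_le (by norm_num : (0:ℝ) ≤ 1)] at hx
    exact (hode x hx).symm
  have h2 : ∫ x in (0:ℝ)..1, (-(dd x) - 2 * Complex.I * k * d x - E)
      = (∫ x in (0:ℝ)..1, (-(dd x) - 2 * Complex.I * k * d x)) - ∫ _x in (0:ℝ)..1, E := by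
    apply intervalIntegral.integral_sub
    · exact (hIdd.neg).sub (hId.const_mul _)
    · exact intervalIntegrable_const
  have h3 : ∫ x in (0:ℝ)..1, (-(dd x) - 2 * Complex.I * k * d x)
      = (∫ x in (0:ℝ)..1, -(dd x)) - ∫ x in (0:ℝ)..1, 2 * Complex.I * k * d x :=
    intervalIntegral.integral_sub hIdd.neg (hId.const_mul _)
  rw [h1, h2, h3, intervalIntegral.integral_neg, hidd,
    intervalIntegral.integral_const_mul, hid, intervalIntegral.integral_const]
  simp


-- derivative of x ↦ ∫ t in 0..x, h t for continuous h
lemma hasDerivAt_primitive (h : ℝ → ℂ) (hh : Continuous h) (x : ℝ) :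
    HasDerivAt (fun y => ∫ t in (0:ℝ)..y, h t) (h x) x :=
  intervalIntegral.integral_hasDerivAt_right (hh.intervalIntegrable _ _)
    hh.stronglyMeasurable.stronglyMeasurableAtFilter hh.continuousAt

lemma hasDerivAt_cexp_mul (c : ℂ) (x : ℝ) :
    HasDerivAt (fun y : ℝ => Complex.exp (c * y)) (c * Complex.exp (c * x)) x := by
  have h1 : HasDerivAt (fun y : ℝ => c * (y:ℂ)) c x := by
    simpa using (Complex.ofRealCLM.hasDerivAt (x := x)).const_mul c
  simpa [mul_comm] using h1.cexp

lemma existence (k : ℝ) (hk : Complex.exp (2 * Complex.I * k) ≠ 1)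
    (g : ℝ → ℂ) (hg : Continuous g) (σ : ℂ) :
    ∃ (ζ : ℝ → ℂ),
      ContDiffOn ℝ 2 ζ (Icc (0:ℝ) 1) ∧
      ζ 0 = ζ 1 ∧
      derivWithin ζ (Icc (0:ℝ) 1) 0 = derivWithin ζ (Icc (0:ℝ) 1) 1 ∧
      (∀ x ∈ Icc (0:ℝ) 1,
        -(derivWithin (derivWithin ζ (Icc (0:ℝ) 1)) (Icc (0:ℝ) 1) x)
          - 2 * Complex.I * k * derivWithin ζ (Icc (0:ℝ) 1) x
          - (-∫ t in (0:ℝ)..1, g t) = g x) ∧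
      2 * (∫ y in (0:ℝ)..1, ζ y) = σ := by
  set c : ℂ := 2 * Complex.I * k with hcdef
  have hc0 : c ≠ 0 := fun h => hk (by rw [h, Complex.exp_zero])
  set E : ℂ := -∫ t in (0:ℝ)..1, g t with hEdef
  have hgE : Continuous (fun t : ℝ => Complex.exp (c * t) * (g t + E)) :=
    (Complex.continuous_exp.comp (continuous_const.mul Complex.continuous_ofReal)).mul
      (hg.add continuous_const)
  set G : ℝ → ℂ := fun x => ∫ t in (0:ℝ)..x, Complex.exp (c * t) * (g t + E) with hGdef
  have hG : ∀ x : ℝ, HasDerivAt G (Complex.exp (c * x) * (g x + E)) x :=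
    hasDerivAt_primitive _ hgE
  have hGc : Continuous G := continuous_iff_continuousAt.mpr fun x => (hG x).continuousAt
  set J : ℂ := G 1 with hJdef
  have hne : (1 : ℂ) - Complex.exp c ≠ 0 := sub_ne_zero.2 fun h => hk h.symm
  set a : ℂ := J / (1 - Complex.exp c) with hadef
  set u : ℝ → ℂ := fun x => Complex.exp (-(c * x)) * (a - G x) with hudef
  have hu : ∀ x, HasDerivAt u (-c * u x - (g x + E)) x := by
    intro x
    have h1 : HasDerivAt (fun y : ℝ => Complex.exp (-(c * y)))
        (-c * Complex.exp (-(c * x))) x := by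
      simpa [neg_mul] using hasDerivAt_cexp_mul (-c) x
    have h2 := h1.mul ((hasDerivAt_const x a).sub (hG x))
    have he : Complex.exp (-(c * x)) * Complex.exp (c * x) = 1 := by
      rw [← Complex.exp_add]; simp
    refine h2.congr_deriv ?_
    symm
    simp only [hudef, Pi.sub_apply]
    linear_combination (g x + E) * he
  have huc : Continuous u :=
    (Complex.continuous_exp.comp (continuous_const.mul Complex.continuous_ofReal).neg).mul
      (continuous_const.sub hGc)
  set Φ : ℝ → ℂ := fun x => ∫ t in (0:ℝ)..x, u t with hΦdef
  have hΦ : ∀ x, HasDerivAt Φ (u x) x := hasDerivAt_primitive u huc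
  have hΦc : Continuous Φ := continuous_iff_continuousAt.mpr fun x => (hΦ x).continuousAt
  set b : ℂ := σ / 2 - ∫ x in (0:ℝ)..1, Φ x with hbdef
  set ζ : ℝ → ℂ := fun x => b + Φ x with hζdef
  have hζ' : ∀ x, HasDerivAt ζ (u x) x := fun x => (hΦ x).const_add b
  have hderiv : deriv ζ = u := funext fun x => (hζ' x).deriv
  have hu'c : Continuous (fun x => -c * u x - (g x + E)) :=
    (continuous_const.mul huc).sub (hg.add continuous_const)
  have hu' : deriv u = fun x => -c * u x - (g x + E) := funext fun x => (hu x).deriv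
  have hcd : ContDiff ℝ 2 ζ := by
    rw [show (2 : WithTop ℕ∞) = 1 + 1 by norm_num, contDiff_succ_iff_deriv]
    refine ⟨fun x => (hζ' x).differentiableAt, by simp, ?_⟩
    rw [hderiv, show (1 : WithTop ℕ∞) = 0 + 1 by norm_num, contDiff_succ_iff_deriv]
    refine ⟨fun x => (hu x).differentiableAt, by simp, ?_⟩
    rw [hu', contDiff_zero]
    exact hu'c
  have hU : UniqueDiffOn ℝ (Icc (0:ℝ) 1) := uniqueDiffOn_Icc (by norm_num)
  have hdW : ∀ x ∈ Icc (0:ℝ) 1, derivWithin ζ (Icc (0:ℝ) 1) x = u x := fun x hx =>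
    (hζ' x).hasDerivWithinAt.derivWithin (hU x hx)
  have hddW : ∀ x ∈ Icc (0:ℝ) 1,
      derivWithin (derivWithin ζ (Icc (0:ℝ) 1)) (Icc (0:ℝ) 1) x
        = -c * u x - (g x + E) := by
    intro x hx
    rw [derivWithin_congr hdW (hdW x hx)]
    exact (hu x).hasDerivWithinAt.derivWithin (hU x hx)
  have hG0 : G 0 = 0 := by simp [hGdef]
  have hu0 : u 0 = a := by simp [hudef, hG0]
  have hu10 : u 1 = u 0 := by
    have h1 : u 1 = Complex.exp (-c) * (a - J) := by
      simp [hudef, hJdef]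
    rw [h1, hu0, Complex.exp_neg, hadef]
    field_simp [Complex.exp_ne_zero c, hne]
    ring
  have hintu' : ∫ x in (0:ℝ)..1, (-c * u x - (g x + E)) = u 1 - u 0 :=
    intervalIntegral.integral_eq_sub_of_hasDerivAt (fun x _ => hu x)
      (hu'c.intervalIntegrable _ _)
  have hiu : IntervalIntegrable u volume 0 1 := huc.intervalIntegrable _ _
  have higE : IntervalIntegrable (fun x => g x + E) volume 0 1 :=
    (hg.intervalIntegrable _ _).add intervalIntegrable_const
  have hintgE : ∫ x in (0:ℝ)..1, (g x + E) = 0 := by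
    rw [intervalIntegral.integral_add (hg.intervalIntegrable _ _) intervalIntegrable_const,
      intervalIntegral.integral_const]
    simp [hEdef]
  have hIu : ∫ x in (0:ℝ)..1, u x = 0 := by
    have h1 : ∫ x in (0:ℝ)..1, (-c * u x - (g x + E))
        = -c * ∫ x in (0:ℝ)..1, u x := by
      rw [intervalIntegral.integral_sub (hiu.const_mul (-c)) higE,
        intervalIntegral.integral_const_mul, hintgE, sub_zero]
    rw [hintu', hu10, sub_self] at h1
    have h2 : -c * ∫ x in (0:ℝ)..1, u x = 0 := h1.symm
    exact (mul_eq_zero.mp h2).resolve_left (neg_ne_zero.mpr hc0)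
  refine ⟨ζ, hcd.contDiffOn, ?_, ?_, ?_, ?_⟩
  · show b + Φ 0 = b + Φ 1
    have h0 : Φ 0 = 0 := by simp [hΦdef]
    have h1 : Φ 1 = 0 := hIu
    rw [h0, h1]
  · rw [hdW 0 (by constructor <;> norm_num), hdW 1 (by constructor <;> norm_num), hu10]
  · intro x hx
    rw [hddW x hx, hdW x hx]
    ring
  · have h1 : ∫ y in (0:ℝ)..1, ζ y = b + ∫ x in (0:ℝ)..1, Φ x := by
      rw [hζdef]
      rw [intervalIntegral.integral_add intervalIntegrable_const
        (hΦc.intervalIntegrable _ _), intervalIntegral.integral_const]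
      simp
    rw [h1, hbdef]
    ring


lemma hasDerivAt_cexp_mul' (c : ℂ) (x : ℝ) :
    HasDerivAt (fun y : ℝ => Complex.exp (c * y)) (c * Complex.exp (c * x)) x := by
  have h1 : HasDerivAt (fun y : ℝ => c * (y:ℂ)) c x := by
    simpa using (Complex.ofRealCLM.hasDerivAt (x := x)).const_mul c
  simpa [mul_comm] using h1.cexp

lemma uniq (k : ℝ) (hk : Complex.exp (2 * Complex.I * k) ≠ 1)
    (σ : ℂ) (ζ₁ ζ₂ : ℝ → ℂ)
    (hc₁ : ContDiffOn ℝ 2 ζ₁ (Icc (0:ℝ) 1)) (hc₂ : ContDiffOn ℝ 2 ζ₂ (Icc (0:ℝ) 1))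
    (hp₁ : derivWithin ζ₁ (Icc (0:ℝ) 1) 0 = derivWithin ζ₁ (Icc (0:ℝ) 1) 1)
    (hp₂ : derivWithin ζ₂ (Icc (0:ℝ) 1) 0 = derivWithin ζ₂ (Icc (0:ℝ) 1) 1)
    (hode : ∀ x ∈ Icc (0:ℝ) 1,
      derivWithin (derivWithin ζ₁ (Icc (0:ℝ) 1)) (Icc (0:ℝ) 1) x
        + 2 * Complex.I * k * derivWithin ζ₁ (Icc (0:ℝ) 1) x
      = derivWithin (derivWithin ζ₂ (Icc (0:ℝ) 1)) (Icc (0:ℝ) 1) x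
        + 2 * Complex.I * k * derivWithin ζ₂ (Icc (0:ℝ) 1) x)
    (hσ₁ : 2 * (∫ y in (0:ℝ)..1, ζ₁ y) = σ) (hσ₂ : 2 * (∫ y in (0:ℝ)..1, ζ₂ y) = σ) :
    EqOn ζ₁ ζ₂ (Icc (0:ℝ) 1) := by
  set c : ℂ := 2 * Complex.I * k with hcdef
  have hU : UniqueDiffOn ℝ (Icc (0:ℝ) 1) := uniqueDiffOn_Icc (by norm_num)
  set d₁ := derivWithin ζ₁ (Icc (0:ℝ) 1) with hd₁
  set d₂ := derivWithin ζ₂ (Icc (0:ℝ) 1) with hd₂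
  have hd1 : ContDiffOn ℝ 1 d₁ (Icc (0:ℝ) 1) := hc₁.derivWithin hU (by norm_num)
  have hd2 : ContDiffOn ℝ 1 d₂ (Icc (0:ℝ) 1) := hc₂.derivWithin hU (by norm_num)
  have hd1D : DifferentiableOn ℝ d₁ (Icc (0:ℝ) 1) := hd1.differentiableOn (by norm_num)
  have hd2D : DifferentiableOn ℝ d₂ (Icc (0:ℝ) 1) := hd2.differentiableOn (by norm_num)
  set v : ℝ → ℂ := fun x => d₁ x - d₂ x with hvdef
  have hv' : ∀ x ∈ Icc (0:ℝ) 1, HasDerivWithinAt v (-c * v x) (Icc (0:ℝ) 1) x := by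
    intro x hx
    have h1 := (hd1D x hx).hasDerivWithinAt
    have h2 := (hd2D x hx).hasDerivWithinAt
    have h3 := h1.sub h2
    have h4 : derivWithin d₁ (Icc (0:ℝ) 1) x - derivWithin d₂ (Icc (0:ℝ) 1) x
        = -c * v x := by
      have := hode x hx
      simp only [hvdef]
      linear_combination this
    rwa [h4] at h3
  set w : ℝ → ℂ := fun x => Complex.exp (c * x) * v x with hwdef
  have hw : ∀ x ∈ Icc (0:ℝ) 1, HasDerivWithinAt w 0 (Icc (0:ℝ) 1) x := by
    intro x hx
    have h1 := ((hasDerivAt_cexp_mul' c x).hasDerivWithinAt).mul (hv' x hx)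
    refine h1.congr_deriv ?_
    ring
  have hwD : DifferentiableOn ℝ w (Icc (0:ℝ) 1) :=
    fun x hx => (hw x hx).differentiableWithinAt
  have hwz : ∀ x ∈ Ico (0:ℝ) 1, derivWithin w (Icc (0:ℝ) 1) x = 0 :=
    fun x hx => (hw x (Ico_subset_Icc_self hx)).derivWithin (hU x (Ico_subset_Icc_self hx))
  have hwconst := constant_of_derivWithin_zero hwD hwz
  have hv10 : v 1 = v 0 := by simp only [hvdef]; rw [← hp₁, ← hp₂]
  have hv0 : v 0 = 0 := by
    have h1 : w 1 = w 0 := hwconst 1 (by constructor <;> norm_num)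
    simp only [hwdef] at h1
    push_cast at h1
    rw [mul_one, mul_zero, Complex.exp_zero, one_mul, hv10] at h1
    have h2 : (Complex.exp c - 1) * v 0 = 0 := by linear_combination h1
    rcases mul_eq_zero.mp h2 with h | h
    · exact absurd (sub_eq_zero.mp h) hk
    · exact h
  have hvz : ∀ x ∈ Icc (0:ℝ) 1, v x = 0 := by
    intro x hx
    have h1 : w x = w 0 := hwconst x hx
    simp only [hwdef] at h1
    rw [hv0, mul_zero] at h1
    exact (mul_eq_zero.mp h1).resolve_left (Complex.exp_ne_zero _)
  set h : ℝ → ℂ := fun x => ζ₁ x - ζ₂ x with hhdef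
  have hhD : DifferentiableOn ℝ h (Icc (0:ℝ) 1) :=
    (hc₁.differentiableOn (by norm_num)).sub (hc₂.differentiableOn (by norm_num))
  have hhz : ∀ x ∈ Ico (0:ℝ) 1, derivWithin h (Icc (0:ℝ) 1) x = 0 := by
    intro x hx
    have hx' := Ico_subset_Icc_self hx
    have h1 := ((hc₁.differentiableOn (by norm_num) x hx').hasDerivWithinAt.sub
      (hc₂.differentiableOn (by norm_num) x hx').hasDerivWithinAt)
    have h2 : d₁ x - d₂ x = 0 := hvz x hx'
    rw [h2] at h1
    exact h1.derivWithin (hU x hx')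
  have hhconst := constant_of_derivWithin_zero hhD hhz
  have hint : ∫ x in (0:ℝ)..1, h x = h 0 := by
    have h1 : EqOn h (fun _ => h 0) (uIcc (0:ℝ) 1) := by
      rw [uIcc_of_le (by norm_num : (0:ℝ) ≤ 1)]
      exact fun x hx => hhconst x hx
    rw [intervalIntegral.integral_congr h1, intervalIntegral.integral_const]
    simp
  have hint2 : ∫ x in (0:ℝ)..1, h x = 0 := by
    have hI₁ : IntervalIntegrable ζ₁ volume 0 1 :=
      (hc₁.continuousOn.mono (by rw [uIcc_of_le (by norm_num : (0:ℝ) ≤ 1)])).intervalIntegrable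
    have hI₂ : IntervalIntegrable ζ₂ volume 0 1 :=
      (hc₂.continuousOn.mono (by rw [uIcc_of_le (by norm_num : (0:ℝ) ≤ 1)])).intervalIntegrable
    simp only [hhdef]
    rw [intervalIntegral.integral_sub hI₁ hI₂]
    have : (∫ y in (0:ℝ)..1, ζ₁ y) = ∫ y in (0:ℝ)..1, ζ₂ y := by
      have := hσ₁.trans hσ₂.symm
      field_simp at this
      exact this
    rw [this, sub_self]
  have hh0 : h 0 = 0 := by rw [← hint, hint2]
  intro x hx
  have := hhconst x hx
  rw [hh0] at this
  simpa only [hhdef, sub_eq_zero] using this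

/-- **Solvability of the shifted periodic ODE.** Let `k ∈ ℝ` with `e^{2ik} ≠ 1`, let
`f : [0,1] → ℂ` be continuous and `σ ∈ ℂ`. Then there exists exactly one pair `(ζ, E)` with
`ζ` twice continuously differentiable on `[0,1]` and `E ∈ ℂ` such that `ζ(0) = ζ(1)`,
`ζ'(0) = ζ'(1)`, `−ζ''(x) − 2ik ζ'(x) − E = f(x)` on `[0,1]` and `2 ∫_0^1 ζ = σ`.
Moreover, necessarily `E = −∫_0^1 f`. -/
theorem stmt18 (k : ℝ) (hk : Complex.exp (2 * Complex.I * k) ≠ 1)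
    (f : ℝ → ℂ) (hf : ContinuousOn f (Icc (0:ℝ) 1)) (σ : ℂ) :
    (∃ (ζ : ℝ → ℂ) (E : ℂ),
      ContDiffOn ℝ 2 ζ (Icc (0:ℝ) 1) ∧
      ζ 0 = ζ 1 ∧
      derivWithin ζ (Icc (0:ℝ) 1) 0 = derivWithin ζ (Icc (0:ℝ) 1) 1 ∧
      (∀ x ∈ Icc (0:ℝ) 1,
        -(derivWithin (derivWithin ζ (Icc (0:ℝ) 1)) (Icc (0:ℝ) 1) x)
          - 2 * Complex.I * k * derivWithin ζ (Icc (0:ℝ) 1) x - E = f x) ∧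
      2 * (∫ y in (0:ℝ)..1, ζ y) = σ) ∧
    (∀ (ζ₁ ζ₂ : ℝ → ℂ) (E₁ E₂ : ℂ),
      (ContDiffOn ℝ 2 ζ₁ (Icc (0:ℝ) 1) ∧
        ζ₁ 0 = ζ₁ 1 ∧
        derivWithin ζ₁ (Icc (0:ℝ) 1) 0 = derivWithin ζ₁ (Icc (0:ℝ) 1) 1 ∧
        (∀ x ∈ Icc (0:ℝ) 1,
          -(derivWithin (derivWithin ζ₁ (Icc (0:ℝ) 1)) (Icc (0:ℝ) 1) x)
            - 2 * Complex.I * k * derivWithin ζ₁ (Icc (0:ℝ) 1) x - E₁ = f x) ∧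
        2 * (∫ y in (0:ℝ)..1, ζ₁ y) = σ) →
      (ContDiffOn ℝ 2 ζ₂ (Icc (0:ℝ) 1) ∧
        ζ₂ 0 = ζ₂ 1 ∧
        derivWithin ζ₂ (Icc (0:ℝ) 1) 0 = derivWithin ζ₂ (Icc (0:ℝ) 1) 1 ∧
        (∀ x ∈ Icc (0:ℝ) 1,
          -(derivWithin (derivWithin ζ₂ (Icc (0:ℝ) 1)) (Icc (0:ℝ) 1) x)
            - 2 * Complex.I * k * derivWithin ζ₂ (Icc (0:ℝ) 1) x - E₂ = f x) ∧
        2 * (∫ y in (0:ℝ)..1, ζ₂ y) = σ) →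
      E₁ = E₂ ∧ EqOn ζ₁ ζ₂ (Icc (0:ℝ) 1)) ∧
    (∀ (ζ : ℝ → ℂ) (E : ℂ),
      (ContDiffOn ℝ 2 ζ (Icc (0:ℝ) 1) ∧
        ζ 0 = ζ 1 ∧
        derivWithin ζ (Icc (0:ℝ) 1) 0 = derivWithin ζ (Icc (0:ℝ) 1) 1 ∧
        (∀ x ∈ Icc (0:ℝ) 1,
          -(derivWithin (derivWithin ζ (Icc (0:ℝ) 1)) (Icc (0:ℝ) 1) x)
            - 2 * Complex.I * k * derivWithin ζ (Icc (0:ℝ) 1) x - E = f x) ∧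
        2 * (∫ y in (0:ℝ)..1, ζ y) = σ) →
      E = -∫ x in (0:ℝ)..1, f x) := by
  refine ⟨?_, ?_, ?_⟩
  · -- existence
    set p : ℝ → ℝ := fun x => max 0 (min 1 x) with hpdef
    have hp : Continuous p := continuous_const.max (continuous_const.min continuous_id)
    have hpm : ∀ x, p x ∈ Icc (0:ℝ) 1 := by
      intro x
      constructor
      · exact le_max_left _ _
      · exact max_le (by norm_num) (min_le_left _ _)
    set g : ℝ → ℂ := fun x => f (p x) with hgdef
    have hgc : Continuous g := hf.comp_continuous hp hpm
    have hgeq : EqOn g f (Icc (0:ℝ) 1) := by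
      intro x hx
      simp only [hgdef, hpdef]
      rw [min_eq_right hx.2, max_eq_right hx.1]
    have hint : (∫ t in (0:ℝ)..1, g t) = ∫ t in (0:ℝ)..1, f t := by
      apply intervalIntegral.integral_congr
      rwa [uIcc_of_le (by norm_num : (0:ℝ) ≤ 1)]
    obtain ⟨ζ, h1, h2, h3, h4, h5⟩ := existence k hk g hgc σ
    refine ⟨ζ, -∫ x in (0:ℝ)..1, f x, h1, h2, h3, ?_, h5⟩
    intro x hx
    rw [← hgeq hx, ← hint]
    exact h4 x hx
  · -- uniqueness
    rintro ζ₁ ζ₂ E₁ E₂ ⟨hA₁, hB₁, hC₁, hD₁, hE₁⟩ ⟨hA₂, hB₂, hC₂, hD₂, hE₂⟩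
    have hEe : E₁ = E₂ := by
      rw [keyE k f ζ₁ E₁ hA₁ hB₁ hC₁ hD₁, keyE k f ζ₂ E₂ hA₂ hB₂ hC₂ hD₂]
    refine ⟨hEe, ?_⟩
    apply uniq k hk σ ζ₁ ζ₂ hA₁ hA₂ hC₁ hC₂ _ hE₁ hE₂
    intro x hx
    have e₁ := hD₁ x hx
    have e₂ := hD₂ x hx
    have : (-(derivWithin (derivWithin ζ₁ (Icc (0:ℝ) 1)) (Icc (0:ℝ) 1) x)
          - 2 * Complex.I * k * derivWithin ζ₁ (Icc (0:ℝ) 1) x - E₁)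
        = (-(derivWithin (derivWithin ζ₂ (Icc (0:ℝ) 1)) (Icc (0:ℝ) 1) x)
          - 2 * Complex.I * k * derivWithin ζ₂ (Icc (0:ℝ) 1) x - E₂) := by
      rw [e₁, e₂]
    rw [hEe] at this
    linear_combination -this
  · -- E value
    rintro ζ E ⟨hA, hB, hC, hD, hE⟩
    exact keyE k f ζ E hA hB hC hD
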